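/- Let T be a real random variable whose cumulative distribution function F is continuous on ℝ and symmetric about zero in the sense that F(−t) = 1 − F(t) for all t ∈ ℝ. Then for every b ∈ ℝ and every u ∈ [0,1], P( 1 − |F(T + b) − F(−T)| ≤ u ) = u. -/

import Mathlib

open MeasureTheory ProbabilityTheory Set Filter Function Topology

lemma auxLeftLim {μ : Measure ℝ} (hc : Continuous (cdf μ)) (x : ℝ) :
    Function.leftLim (cdf μ) x = cdf μ x :=
  leftLim_eq_of_tendsto
    ((hc.tendsto x).mono_left nhdsWithin_le_nhds)

lemma auxSingleton {μ : Measure ℝ} [IsProbabilityMeasure μ] (hc : Continuous (cdf μ)) (x : ℝ) :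
    μ {x} = 0 := by
  conv_lhs => rw [← measure_cdf μ]
  rw [StieltjesFunction.measure_singleton, auxLeftLim hc, sub_self, ENNReal.ofReal_zero]

lemma auxIio {μ : Measure ℝ} [IsProbabilityMeasure μ] (hc : Continuous (cdf μ)) (x : ℝ) :
    μ (Iio x) = ENNReal.ofReal (cdf μ x) := by
  rw [← Set.Iic_diff_right, measure_diff_null (auxSingleton hc x), ofReal_cdf]

lemma auxIci {μ : Measure ℝ} [IsProbabilityMeasure μ] (hc : Continuous (cdf μ)) (x : ℝ) :
    μ (Ici x) = ENNReal.ofReal (1 - cdf μ x) := by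
  conv_lhs => rw [← measure_cdf μ]
  rw [StieltjesFunction.measure_Ici _ (tendsto_cdf_atTop μ), auxLeftLim hc]

lemma auxIcc {μ : Measure ℝ} [IsProbabilityMeasure μ] (hc : Continuous (cdf μ)) (a b : ℝ) :
    μ (Icc a b) = ENNReal.ofReal (cdf μ b - cdf μ a) := by
  conv_lhs => rw [← measure_cdf μ]
  rw [StieltjesFunction.measure_Icc, auxLeftLim hc]

lemma auxConst {μ : Measure ℝ} [IsProbabilityMeasure μ] (hc : Continuous (cdf μ)) (v : ℝ) :
    μ {y | cdf μ y = v} = 0 := by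
  set B : Set ℝ := {y | cdf μ y = v} with hB
  rcases Set.eq_empty_or_nonempty B with h | h
  · simp [h]
  have hclosed : IsClosed B := isClosed_eq hc continuous_const
  have hmono : Monotone (cdf μ) := monotone_cdf μ
  by_cases hbb : BddBelow B
  · by_cases hba : BddAbove B
    · have h0 : sInf B ∈ B := hclosed.csInf_mem h hbb
      have h1 : sSup B ∈ B := hclosed.csSup_mem h hba
      have hsub : B ⊆ Icc (sInf B) (sSup B) := fun y hy => ⟨csInf_le hbb hy, le_csSup hba hy⟩
      refine le_antisymm ?_ (zero_le)
      calc μ B ≤ μ (Icc (sInf B) (sSup B)) := measure_mono hsub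
        _ = ENNReal.ofReal (cdf μ (sSup B) - cdf μ (sInf B)) := auxIcc hc _ _
        _ = 0 := by rw [h1, h0, sub_self, ENNReal.ofReal_zero]
    · -- unbounded above : v = 1-ish
      have hvge : ∀ z, cdf μ z ≤ v := by
        intro z
        obtain ⟨y, hy, hzy⟩ := not_bddAbove_iff.mp hba z
        exact (hmono hzy.le).trans hy.le
      have h1v : (1:ℝ) ≤ v := le_of_tendsto (tendsto_cdf_atTop μ) (Eventually.of_forall hvge)
      have h0 : sInf B ∈ B := hclosed.csInf_mem h hbb
      refine le_antisymm ?_ (zero_le)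
      calc μ B ≤ μ (Ici (sInf B)) := measure_mono (fun y hy => csInf_le hbb hy)
        _ = ENNReal.ofReal (1 - cdf μ (sInf B)) := auxIci hc _
        _ = 0 := by rw [h0]; exact ENNReal.ofReal_eq_zero.mpr (by linarith)
  · have hvle : ∀ z, v ≤ cdf μ z := by
      intro z
      obtain ⟨y, hy, hzy⟩ := not_bddBelow_iff.mp hbb z
      exact hy.symm.le.trans (hmono hzy.le)
    have h0v : v ≤ (0:ℝ) := ge_of_tendsto (tendsto_cdf_atBot μ) (Eventually.of_forall hvle)
    by_cases hba : BddAbove B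
    · have h1 : sSup B ∈ B := hclosed.csSup_mem h hba
      refine le_antisymm ?_ (zero_le)
      calc μ B ≤ μ (Iic (sSup B)) := measure_mono (fun y hy => le_csSup hba hy)
        _ = ENNReal.ofReal (cdf μ (sSup B)) := (ofReal_cdf μ _).symm
        _ = 0 := by rw [h1]; exact ENNReal.ofReal_eq_zero.mpr h0v
    · exfalso
      have hvge : ∀ z, cdf μ z ≤ v := by
        intro z
        obtain ⟨y, hy, hzy⟩ := not_bddAbove_iff.mp hba z
        exact (hmono hzy.le).trans hy.le
      have h1v : (1:ℝ) ≤ v := le_of_tendsto (tendsto_cdf_atTop μ) (Eventually.of_forall hvge)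
      linarith
theorem stmt_13 {Ω : Type*} [MeasurableSpace Ω] (P : Measure Ω) [IsProbabilityMeasure P]
    (T : Ω → ℝ) (hT : Measurable T)
    (F : ℝ → ℝ) (hF : F = fun t => ProbabilityTheory.cdf (P.map T) t)
    (hFcont : Continuous F) (hFsymm : ∀ t : ℝ, F (-t) = 1 - F t)
    (b : ℝ) (u : ℝ) (hu : u ∈ Set.Icc (0 : ℝ) 1) :
    P {ω | 1 - |F (T ω + b) - F (-T ω)| ≤ u} = ENNReal.ofReal u := by
  obtain ⟨hu0, hu1⟩ := hu
  set μ : Measure ℝ := P.map T with hμ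
  haveI : IsProbabilityMeasure μ := Measure.isProbabilityMeasure_map hT.aemeasurable
  have hFc : F = (cdf μ : ℝ → ℝ) := hF
  have hcdfc : Continuous (cdf μ) := hFc ▸ hFcont
  have hmono : Monotone F := hFc ▸ monotone_cdf μ
  have h0 : ∀ x, 0 ≤ F x := fun x => hFc ▸ cdf_nonneg μ x
  have h1 : ∀ x, F x ≤ 1 := fun x => hFc ▸ cdf_le_one μ x
  have hIic : ∀ x, μ (Iic x) = ENNReal.ofReal (F x) := fun x => by
    rw [hFc]; exact (ofReal_cdf μ x).symm
  have hIio : ∀ x, μ (Iio x) = ENNReal.ofReal (F x) := fun x => by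
    rw [hFc]; exact auxIio hcdfc x
  have hconst : ∀ v : ℝ, μ {y | F y = v} = 0 := fun v => by
    rw [hFc]; exact auxConst hcdfc v
  have hbot : Tendsto F atBot (𝓝 0) := hFc ▸ tendsto_cdf_atBot μ
  have htop : Tendsto F atTop (𝓝 1) := hFc ▸ tendsto_cdf_atTop μ
  set G : ℝ → ℝ := fun t => F (t + b) + F t - 1 with hG
  have hGapp : ∀ t, G t = F (t + b) + F t - 1 := fun t => rfl
  have hGc : Continuous G :=
    ((hFcont.comp (continuous_add_right b)).add hFcont).sub continuous_const
  have hGmono : Monotone G := fun x y hxy => by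
    simp only [hGapp]
    have := hmono (show x + b ≤ y + b by linarith)
    have := hmono hxy
    linarith
  have hGsym : ∀ t, G (-t - b) = -G t := by
    intro t
    have e1 : -t - b + b = -t := by ring
    have e2 : -t - b = -(t + b) := by ring
    have e3 : G (-t - b) = F (-t) + F (-(t + b)) - 1 := by rw [hGapp, e1, e2]
    rw [e3, hFsymm, hFsymm, hGapp]
    ring
  have haddb : Tendsto (fun t : ℝ => t + b) atBot atBot :=
    tendsto_atBot_add_const_right _ b tendsto_id
  have haddb' : Tendsto (fun t : ℝ => t + b) atTop atTop :=
    tendsto_atTop_add_const_right _ b tendsto_id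
  have hGbot : Tendsto G atBot (𝓝 (-1)) := by
    have h := ((hbot.comp haddb).add hbot).sub (tendsto_const_nhds (α := ℝ) (x := (1:ℝ)))
    norm_num at h
    exact h
  have hGtop : Tendsto G atTop (𝓝 1) := by
    have h := ((htop.comp haddb').add htop).sub (tendsto_const_nhds (α := ℝ) (x := (1:ℝ)))
    norm_num at h
    exact h
  have hkey : ∀ x : ℝ, F (x + b) - F (-x) = G x := by
    intro x
    rw [hFsymm, hGapp]; ring
  have hsetT : {ω | 1 - |F (T ω + b) - F (-T ω)| ≤ u} = T ⁻¹' {x | 1 - |G x| ≤ u} := by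
    ext ω
    simp only [Set.mem_setOf_eq, Set.mem_preimage, hkey]
  have hsmeas : MeasurableSet {x : ℝ | 1 - |G x| ≤ u} :=
    (isClosed_le (continuous_const.sub hGc.abs) continuous_const).measurableSet
  have hPmap : P {ω | 1 - |F (T ω + b) - F (-T ω)| ≤ u} = μ {x | 1 - |G x| ≤ u} := by
    rw [hsetT, hμ, Measure.map_apply hT hsmeas]
  rw [hPmap]
  rcases eq_or_lt_of_le hu0 with h0u | h0u
  · -- u = 0
    rw [← h0u, ENNReal.ofReal_zero]
    refine le_antisymm ?_ (zero_le)
    have hsub : {x : ℝ | 1 - |G x| ≤ 0} ⊆ {y | F y = 1} ∪ {y | F y = 0} := by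
      intro x hx
      simp only [Set.mem_setOf_eq] at hx
      rcases le_abs.mp (show (1:ℝ) ≤ |G x| by linarith) with h | h
      · left
        have := hGapp x
        have h1x := h1 x
        have h1xb := h1 (x + b)
        show F x = 1
        linarith [hGapp x ▸ h]
      · right
        have h0x := h0 x
        have h0xb := h0 (x + b)
        show F x = 0
        have : -G x ≥ 1 := h
        rw [hGapp x] at this
        linarith
    calc μ {x : ℝ | 1 - |G x| ≤ 0} ≤ μ ({y | F y = 1} ∪ {y | F y = 0}) := measure_mono hsub
      _ ≤ μ {y | F y = 1} + μ {y | F y = 0} := measure_union_le _ _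
      _ = 0 := by rw [hconst, hconst, add_zero]
  rcases eq_or_lt_of_le hu1 with h1u | h1u
  · -- u = 1
    have : {x : ℝ | 1 - |G x| ≤ u} = Set.univ := by
      refine Set.eq_univ_of_forall (fun x => ?_)
      have := abs_nonneg (G x)
      simp only [Set.mem_setOf_eq]
      linarith
    rw [this, measure_univ, h1u, ENNReal.ofReal_one]
  · -- 0 < u < 1
    set c : ℝ := 1 - u with hc
    have hc0 : 0 < c := by simp [hc]; linarith
    have hc1 : c < 1 := by simp [hc]; linarith
    obtain ⟨x₁, hx₁⟩ := (hGbot.eventually_lt_const (show (-1:ℝ) < c by linarith)).exists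
    obtain ⟨x₂, hx₂⟩ := (hGtop.eventually_const_lt (show c < 1 by linarith)).exists
    obtain ⟨q, hq⟩ := intermediate_value_univ x₁ x₂ hGc ⟨hx₁.le, hx₂.le⟩
    set p : ℝ := -q - b with hp
    have hGp : G p = -c := by rw [hp, hGsym, hq]
    have hFqp : F q - F p = c := by
      have h1' : F (-(q + b)) = 1 - F (q + b) := hFsymm (q + b)
      have h2' : p = -(q + b) := by rw [hp]; ring
      have h3' : G q = c := hq
      rw [hGapp] at h3'
      rw [h2', h1']
      linarith
    -- plateau argument: measure of {G < c}
    have hlt : μ {x | G x < c} = ENNReal.ofReal (F q) := by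
      refine le_antisymm ?_ ?_
      · refine le_trans (measure_mono (fun x hx => ?_)) (hIio q).le
        simp only [Set.mem_setOf_eq] at hx
        by_contra hqx
        simp only [Set.mem_Iio, not_lt] at hqx
        exact absurd (hq ▸ hGmono hqx) (not_le.mpr hx)
      · rw [← hIio q]
        refine le_trans (measure_mono (fun x hx => ?_))
          (le_trans (measure_union_le {x | G x < c} {y | F y = F q})
            (by rw [hconst, add_zero]))
        simp only [Set.mem_Iio] at hx
        by_cases hGx : G x < c
        · exact Or.inl hGx
        · right
          have hle : G x ≤ c := hq ▸ hGmono hx.le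
          have heq : G x = c := le_antisymm hle (not_lt.mp hGx)
          show F x = F q
          have e1 := hGapp x
          have e2 := hGapp q
          have m1 := hmono (show x + b ≤ q + b by linarith)
          have m2 := hmono hx.le
          rw [hGapp] at heq
          have hq' : G q = c := hq
          rw [hGapp] at hq'
          linarith
    have hle' : μ {x | G x ≤ -c} = ENNReal.ofReal (F p) := by
      refine le_antisymm ?_ ?_
      · rw [← hIic p]
        refine le_trans (measure_mono (fun x hx => ?_))
          (le_trans (measure_union_le (Iic p) {y | F y = F p})
            (by rw [hconst, add_zero]))
        simp only [Set.mem_setOf_eq] at hx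
        by_cases hxp : x ≤ p
        · exact Or.inl hxp
        · right
          push_neg at hxp
          have hge : -c ≤ G x := hGp ▸ hGmono hxp.le
          have heq : G x = -c := le_antisymm hx hge
          show F x = F p
          have m1 := hmono (show p + b ≤ x + b by linarith)
          have m2 := hmono hxp.le
          rw [hGapp] at heq
          have hp' : G p = -c := hGp
          rw [hGapp] at hp'
          linarith
      · rw [← hIic p]
        exact measure_mono (fun x hx => by
          simp only [Set.mem_Iic] at hx
          exact le_of_le_of_eq (hGmono hx) hGp )
    have hcompl : {x : ℝ | 1 - |G x| ≤ u}ᶜ = {x | G x < c} \ {x | G x ≤ -c} := by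
      ext x
      simp only [Set.mem_compl_iff, Set.mem_setOf_eq, Set.mem_diff, not_le]
      constructor
      · intro h
        have habs : |G x| < c := by rw [hc]; linarith
        obtain ⟨ha, hb'⟩ := abs_lt.mp habs
        exact ⟨hb', ha⟩
      · rintro ⟨ha, hb'⟩
        have habs : |G x| < c := abs_lt.mpr ⟨hb', ha⟩
        rw [hc] at habs
        linarith
    have hmleq : MeasurableSet {x : ℝ | G x ≤ -c} :=
      (isClosed_le hGc continuous_const).measurableSet
    have hdiff : μ ({x | G x < c} \ {x | G x ≤ -c})
        = μ {x | G x < c} - μ {x | G x ≤ -c} := by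
      refine measure_diff (fun x hx => ?_) hmleq.nullMeasurableSet (measure_ne_top μ _)
      simp only [Set.mem_setOf_eq] at hx ⊢
      linarith
    have hcval : μ ({x : ℝ | 1 - |G x| ≤ u}ᶜ) = ENNReal.ofReal c := by
      rw [hcompl, hdiff, hlt, hle', ← ENNReal.ofReal_sub _ (h0 p), hFqp]
    have hfinal := prob_compl_eq_one_sub (μ := μ) hsmeas.compl
    rw [compl_compl, hcval] at hfinal
    rw [hfinal, ← ENNReal.ofReal_one, ← ENNReal.ofReal_sub _ (by linarith : (0:ℝ) ≤ c)]
    congr 1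
    rw [hc]; ring
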